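/- Let p, q be integers, not both zero, and let Λ be the subgroup of ℤ × ℤ generated by (p, q) and (p + q, −p). Let T : ℤ × ℤ → ℤ × ℤ be the group automorphism T(x, y) = (x + y, −x) (which, in the basis u = (1,0), v = (1/2, √3/2) of the triangular lattice, represents the rotation of the plane by the angle −π/3). Then T maps Λ onto Λ, and the quotient group (ℤ × ℤ)/Λ has exactly p² + pq + q² elements. (This is the case g = π/3 of the equilateral sublattices: the index of an equilateral sublattice of the triangular lattice is n = p² + pq + q².) -/

import Mathlib

open Polynomial AdjoinRoot

noncomputable section

def eisPoly : ℤ[X] := X ^ 2 - X + 1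

lemma eisPoly_monic : eisPoly.Monic := by
  unfold eisPoly; monicity!

lemma eisPoly_natDegree : eisPoly.natDegree = 2 := by
  unfold eisPoly; compute_degree!

abbrev EisR := AdjoinRoot eisPoly

lemma eis_root_sq : (root eisPoly) ^ 2 - root eisPoly + 1 = 0 := by
  have h := AdjoinRoot.mk_self (f := eisPoly)
  have : AdjoinRoot.mk eisPoly (X ^ 2 - X + 1 : ℤ[X]) = 0 := by
    rw [← h]; rfl
  simpa [map_sub, map_add, map_pow, mk_X] using this

def eisBasis : Module.Basis (Fin 2) ℤ EisR :=
  (AdjoinRoot.powerBasis' eisPoly_monic).basis.reindex (finCongr eisPoly_natDegree)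

lemma eisBasis_apply (i : Fin 2) : eisBasis i = root eisPoly ^ (i : ℕ) := by
  rw [eisBasis, Module.Basis.reindex_apply, (AdjoinRoot.powerBasis' eisPoly_monic).basis_eq_pow]
  rfl

instance : Module.Free ℤ EisR := Module.Free.of_basis eisBasis
instance : Module.Finite ℤ EisR := Module.Finite.of_basis eisBasis

def eisE : (ℤ × ℤ) ≃ₗ[ℤ] EisR :=
  (LinearEquiv.finTwoArrow ℤ ℤ).symm.trans eisBasis.equivFun.symm

lemma eisE_apply (a c : ℤ) :
    eisE (a, c) = (a : EisR) + (c : EisR) * root eisPoly := by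
  have h1 : ((LinearEquiv.finTwoArrow ℤ ℤ).symm (a, c) : Fin 2 → ℤ) = ![a, c] := by
    ext i; fin_cases i <;> rfl
  simp [eisE, h1, Module.Basis.equivFun_symm_apply, Fin.sum_univ_two, eisBasis_apply,
    zsmul_eq_mul]

lemma eisE_repr (v : ℤ × ℤ) (i : Fin 2) :
    eisBasis.repr (eisE v) i = ![v.1, v.2] i := by
  have h1 : ((LinearEquiv.finTwoArrow ℤ ℤ).symm v : Fin 2 → ℤ) = ![v.1, v.2] := by
    ext j; fin_cases j <;> rfl
  rw [← eisBasis.equivFun_apply]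
  simp only [eisE, LinearEquiv.trans_apply, LinearEquiv.apply_symm_apply]
  rw [h1]

lemma eisE_mul (a c a' c' : ℤ) :
    eisE (a, c) * eisE (a', c') =
      eisE (a * a' - c * c', a * c' + c * a' + c * c') := by
  simp only [eisE_apply]
  push_cast
  linear_combination ((c : EisR) * (c' : EisR)) * eis_root_sq

end


lemma eis_norm_zero {a b : ℤ} (h : a ^ 2 + a * b + b ^ 2 = 0) : a = 0 ∧ b = 0 := by
  have h4 : (2 * a + b) ^ 2 + 3 * b ^ 2 = 0 := by linear_combination 4 * h
  have hb2 : b ^ 2 = 0 := le_antisymm (by nlinarith [sq_nonneg (2 * a + b)]) (sq_nonneg b)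
  have hb : b = 0 := by
    simpa using pow_eq_zero_iff (n := 2) (by norm_num) |>.mp hb2
  have ha2 : a ^ 2 = 0 := by rw [hb] at h; linarith [h]
  have ha : a = 0 := by
    simpa using pow_eq_zero_iff (n := 2) (by norm_num) |>.mp ha2
  exact ⟨ha, hb⟩

lemma eisE_eq_zero_iff (v : ℤ × ℤ) : eisE v = 0 ↔ v = 0 := by
  constructor
  · intro h
    exact eisE.injective (h.trans (map_zero eisE).symm)
  · rintro rfl; exact map_zero eisE

instance : IsDomain EisR := by
  have hnt : Nontrivial EisR := by
    refine ⟨eisE (0, 0), eisE (1, 0), fun h => ?_⟩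
    have := eisE.injective h
    simp [Prod.ext_iff] at this
  have : NoZeroDivisors EisR := by
    constructor
    intro x y hxy
    obtain ⟨⟨a, b⟩, rfl⟩ := eisE.surjective x
    obtain ⟨⟨c, d⟩, rfl⟩ := eisE.surjective y
    rw [eisE_mul] at hxy
    have h : a * c - b * d = 0 ∧ a * d + b * c + b * d = 0 := by
      simpa [Prod.ext_iff] using (eisE_eq_zero_iff _).mp hxy
    have hN : (a ^ 2 + a * b + b ^ 2) * (c ^ 2 + c * d + d ^ 2) = 0 := by
      have : (a * c - b * d) ^ 2 + (a * c - b * d) * (a * d + b * c + b * d)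
          + (a * d + b * c + b * d) ^ 2 = 0 := by rw [h.1, h.2]; ring
      linear_combination this
    rcases mul_eq_zero.mp hN with h' | h'
    · obtain ⟨ha, hb⟩ := eis_norm_zero h'
      left; rw [ha, hb]; exact map_zero eisE
    · obtain ⟨hc, hd⟩ := eis_norm_zero h'
      right; rw [hc, hd]; exact map_zero eisE
  exact { }

open Ideal Submodule in
/-- Specialization (with `absNorm` replaced by `Nat.card` of the quotient) of
`Ideal.natAbs_det_equiv`, whose proof is reproduced here, since `Ideal.absNorm` itself
requires a `IsDedekindDomain` instance. -/
lemma eis_natAbs_det_equiv (I : Ideal EisR) (hI : I ≠ ⊥) (e : EisR ≃+ I) :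
    Int.natAbs
        (LinearMap.det
          ((Submodule.subtype I).restrictScalars ℤ ∘ₗ AddMonoidHom.toIntLinearMap (e : EisR →+ I))) =
      Nat.card (EisR ⧸ I) := by
  let ι := Module.Free.ChooseBasisIndex ℤ EisR
  let b := Module.Free.chooseBasis ℤ EisR
  cases isEmpty_or_nonempty ι
  · exact (not_nontrivial_iff_subsingleton.mpr
      (Function.Surjective.subsingleton b.repr.toEquiv.symm.surjective) (by infer_instance)).elim
  letI := Ideal.finiteQuotientOfFreeOfNeBot I hI
  letI := Classical.decEq ι
  let a := I.smithCoeffs b hI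
  let b' := I.ringBasis b hI
  let ab := I.selfBasis b hI
  have ab_eq := I.selfBasis_def b hI
  let e' : EisR ≃ₗ[ℤ] I := b'.equiv ab (Equiv.refl _)
  let f : EisR →ₗ[ℤ] EisR := (I.subtype.restrictScalars ℤ).comp (e' : EisR →ₗ[ℤ] I)
  let f_apply : ∀ x, f x = b'.equiv ab (Equiv.refl _) x := fun x => rfl
  suffices (LinearMap.det f).natAbs = Nat.card (EisR ⧸ I) by
    calc
      _ = (LinearMap.det ((Submodule.subtype I).restrictScalars ℤ ∘ₗ
            (AddEquiv.toIntLinearEquiv e : EisR ≃ₗ[ℤ] I))).natAbs := rfl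
      _ = (LinearMap.det ((Submodule.subtype I).restrictScalars ℤ ∘ₗ _)).natAbs :=
            Int.natAbs_eq_iff_associated.mpr (LinearMap.associated_det_comp_equiv _ _ _)
      _ = Nat.card (EisR ⧸ I) := this
  have ha : ∀ i, f (b' i) = a i • b' i := by
    intro i; rw [f_apply, b'.equiv_apply, Equiv.refl_apply, ab_eq]
  calc
    Int.natAbs (LinearMap.det f) = Int.natAbs (LinearMap.toMatrix b' b' f).det := by
      rw [LinearMap.det_toMatrix]
    _ = Int.natAbs (Matrix.diagonal a).det := ?_
    _ = Int.natAbs (∏ i, a i) := by rw [Matrix.det_diagonal]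
    _ = ∏ i, Int.natAbs (a i) := map_prod Int.natAbsHom a Finset.univ
    _ = Nat.card (EisR ⧸ I) := ?_
  · congr 2; ext i j
    rw [LinearMap.toMatrix_apply, ha, LinearEquiv.map_smul, Module.Basis.repr_self, Finsupp.smul_single,
      smul_eq_mul, mul_one]
    by_cases h : i = j
    · rw [h, Matrix.diagonal_apply_eq, Finsupp.single_eq_same]
    · rw [Matrix.diagonal_apply_ne _ h, Finsupp.single_eq_of_ne' (Ne.symm h)]
  · haveI : ∀ i, NeZero (a i).natAbs := fun i =>
      ⟨Int.natAbs_ne_zero.mpr (Ideal.smithCoeffs_ne_zero b I hI i)⟩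
    simp_rw [Nat.card_congr (Ideal.quotientEquivPiZMod I b hI).toEquiv, Nat.card_pi,
      Nat.card_zmod]
    rfl

set_option maxHeartbeats 1000000 in
/-- Let `p, q` be integers, not both zero, and let `Λ ≤ ℤ × ℤ` be generated by
`(p, q)` and `(p + q, −p)`.  Let `T(x, y) = (x + y, −x)` (rotation by `−π/3` in the
triangular-lattice basis).  Then `T` maps `Λ` onto `Λ` and `(ℤ × ℤ)/Λ` has exactly
`p² + pq + q²` elements. -/
theorem stmt9 (p q : ℤ) (hpq : ¬(p = 0 ∧ q = 0))
    (T : (ℤ × ℤ) ≃+ (ℤ × ℤ)) (hT : ∀ x y : ℤ, T (x, y) = (x + y, -x)) :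
    AddSubgroup.map T.toAddMonoidHom
        (AddSubgroup.closure {((p, q) : ℤ × ℤ), (p + q, -p)})
      = AddSubgroup.closure {((p, q) : ℤ × ℤ), (p + q, -p)} ∧
    (Nat.card ((ℤ × ℤ) ⧸ AddSubgroup.closure {((p, q) : ℤ × ℤ), (p + q, -p)}) : ℤ)
      = p ^ 2 + p * q + q ^ 2 := by
  have hn0 : 0 ≤ p ^ 2 + p * q + q ^ 2 := by nlinarith [sq_nonneg (p + q), sq_nonneg p, sq_nonneg q]
  have hnne : p ^ 2 + p * q + q ^ 2 ≠ 0 := by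
    intro h
    apply hpq
    have h4 : (2 * p + q) ^ 2 + 3 * q ^ 2 = 0 := by linear_combination 4 * h
    have hq2 : q ^ 2 = 0 := le_antisymm (by nlinarith [sq_nonneg (2 * p + q)]) (sq_nonneg q)
    have hq : q = 0 := by
      simpa using pow_eq_zero_iff (n := 2) (by norm_num) |>.mp hq2
    have hp2 : p ^ 2 = 0 := by rw [hq] at h; linarith [h]
    have hp : p = 0 := by
      simpa using pow_eq_zero_iff (n := 2) (by norm_num) |>.mp hp2
    exact ⟨hp, hq⟩
  constructor
  · -- Part 1 : T maps Λ onto Λ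
    rw [AddMonoidHom.map_closure, Set.image_insert_eq, Set.image_singleton]
    have e1 : T.toAddMonoidHom (p, q) = ((p + q, -p) : ℤ × ℤ) := hT p q
    have e2 : T.toAddMonoidHom (p + q, -p) = ((q, -(p + q)) : ℤ × ℤ) := by
      have h := hT (p + q) (-p)
      simpa [show p + q + -p = q by ring] using h
    rw [e1, e2]
    apply le_antisymm
    · rw [AddSubgroup.closure_le]
      rintro x hx
      simp only [Set.mem_insert_iff, Set.mem_singleton_iff] at hx
      rcases hx with rfl | rfl
      · exact AddSubgroup.subset_closure (Set.mem_insert_of_mem _ rfl)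
      · have hx : ((q, -(p + q)) : ℤ × ℤ) = (p + q, -p) - (p, q) := by
          simp only [Prod.mk_sub_mk, Prod.mk.injEq]; omega
        rw [hx]
        exact sub_mem (AddSubgroup.subset_closure (Set.mem_insert_of_mem _ rfl))
          (AddSubgroup.subset_closure (Set.mem_insert _ _))
    · rw [AddSubgroup.closure_le]
      rintro x hx
      simp only [Set.mem_insert_iff, Set.mem_singleton_iff] at hx
      rcases hx with rfl | rfl
      · have hx : ((p, q) : ℤ × ℤ) = (p + q, -p) - (q, -(p + q)) := by
          simp only [Prod.mk_sub_mk, Prod.mk.injEq]; omega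
        rw [hx]
        exact sub_mem (AddSubgroup.subset_closure (Set.mem_insert _ _))
          (AddSubgroup.subset_closure (Set.mem_insert_of_mem _ rfl))
      · exact AddSubgroup.subset_closure (Set.mem_insert _ _)
  · -- Part 2 : the index
    set Λ : AddSubgroup (ℤ × ℤ) := AddSubgroup.closure {((p, q) : ℤ × ℤ), (p + q, -p)} with hΛ
    set α : EisR := eisE (p, q) with hα
    set I : Ideal EisR := Ideal.span {α} with hI
    -- injectivity of multiplication by α
    have hmul_inj : ∀ x : EisR, x * α = 0 → x = 0 := by
      intro x hx
      obtain ⟨⟨a, b⟩, rfl⟩ := eisE.surjective x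
      rw [hα, eisE_mul] at hx
      have h0 : eisE ((0, 0) : ℤ × ℤ) = 0 := map_zero eisE
      have h := eisE.injective (hx.trans h0.symm)
      rw [Prod.mk.injEq] at h
      have ha : a * (p ^ 2 + p * q + q ^ 2) = 0 := by
        linear_combination (p + q) * h.1 + q * h.2
      have hb : b * (p ^ 2 + p * q + q ^ 2) = 0 := by
        linear_combination (-q) * h.1 + p * h.2
      have ha0 : a = 0 := by rcases mul_eq_zero.mp ha with h' | h'; exact h'; exact absurd h' hnne
      have hb0 : b = 0 := by rcases mul_eq_zero.mp hb with h' | h'; exact h'; exact absurd h' hnne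
      rw [ha0, hb0]; exact h0
    -- the additive equivalence S ≃+ I given by multiplication by α
    let F : EisR →+ I :=
      { toFun := fun x => ⟨x * α, Ideal.mem_span_singleton'.mpr ⟨x, rfl⟩⟩
        map_zero' := Subtype.ext (zero_mul α)
        map_add' := fun x y => Subtype.ext (add_mul x y α) }
    have hFbij : Function.Bijective F := by
      constructor
      · rw [injective_iff_map_eq_zero]
        intro x hx
        exact hmul_inj x (Subtype.ext_iff.mp hx)
      · rintro ⟨y, hy⟩
        obtain ⟨c, hc⟩ := Ideal.mem_span_singleton'.mp hy
        exact ⟨c, Subtype.ext hc⟩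
    let e' : EisR ≃+ I := AddEquiv.ofBijective F hFbij
    -- compute the determinant of multiplication by α
    have hdet2 : LinearMap.det ((Submodule.subtype I).restrictScalars ℤ ∘ₗ
        AddMonoidHom.toIntLinearMap (e' : EisR →+ I)) = p ^ 2 + p * q + q ^ 2 := by
      set L : EisR →ₗ[ℤ] EisR := (Submodule.subtype I).restrictScalars ℤ ∘ₗ
        AddMonoidHom.toIntLinearMap (e' : EisR →+ I) with hLdef
      have hL : ∀ x : EisR, L x = x * α := fun x => rfl
      have key0 : L (eisBasis 0) = eisE (p, q) := by
        rw [hL, eisBasis_apply]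
        norm_num [hα]
      have key1 : L (eisBasis 1) = eisE (-q, p + q) := by
        rw [hL, eisBasis_apply]
        have h01 : (root eisPoly ^ (((1 : Fin 2)) : ℕ) : EisR) = eisE (0, 1) := by
          rw [show (((1 : Fin 2)) : ℕ) = 1 from rfl, pow_one, eisE_apply]
          push_cast; ring
        rw [h01, hα, eisE_mul]
        norm_num
      rw [← LinearMap.det_toMatrix eisBasis, Matrix.det_fin_two]
      simp only [LinearMap.toMatrix_apply, key0, key1, eisE_repr]
      norm_num
      ring
    have hIbot : I ≠ ⊥ := by
      rw [hI, Ne, Ideal.span_singleton_eq_bot, hα]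
      intro h
      have h2 := eisE.injective (h.trans (map_zero eisE).symm)
      rw [Prod.mk.injEq] at h2
      exact hpq ⟨h2.1, h2.2⟩
    have habs := eis_natAbs_det_equiv I hIbot e'
    rw [hdet2] at habs
    -- Λ maps onto I.toAddSubgroup under eisE
    have hsub : Submodule.span ℤ ({eisE (p, q), eisE (p + q, -p)} : Set EisR)
        = Submodule.restrictScalars ℤ I := by
      apply le_antisymm
      · rw [Submodule.span_le]
        rintro x hx
        simp only [Set.mem_insert_iff, Set.mem_singleton_iff] at hx
        rcases hx with rfl | rfl
        · exact Submodule.restrictScalars_mem _ _ _ |>.mpr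
            (Ideal.mem_span_singleton'.mpr ⟨1, by rw [one_mul, hα]⟩)
        · refine Submodule.restrictScalars_mem _ _ _ |>.mpr
            (Ideal.mem_span_singleton'.mpr ⟨eisE (1, -1), ?_⟩)
          rw [hα, eisE_mul]
          norm_num
      · intro x hx
        rw [Submodule.restrictScalars_mem] at hx
        obtain ⟨c, hc⟩ := Ideal.mem_span_singleton'.mp hx
        obtain ⟨⟨a, b⟩, rfl⟩ := eisE.surjective c
        rw [← hc, hα, eisE_mul]
        have hcomb : eisE (a * p - b * q, a * q + b * p + b * q)
            = a • eisE (p, q) + b • (eisE (p, q) - eisE (p + q, -p)) := by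
          rw [← map_sub, ← map_smul, ← map_smul, ← map_add]
          congr 1
          simp only [Prod.ext_iff, Prod.smul_mk, Prod.mk_add_mk, Prod.mk_sub_mk, smul_eq_mul]
          constructor <;> ring
        rw [hcomb]
        exact add_mem
          (Submodule.smul_mem _ a (Submodule.subset_span (Set.mem_insert _ _)))
          (Submodule.smul_mem _ b (sub_mem
            (Submodule.subset_span (Set.mem_insert _ _))
            (Submodule.subset_span (Set.mem_insert_of_mem _ rfl))))
    have hmap : AddSubgroup.map (eisE.toAddEquiv : (ℤ × ℤ) →+ EisR) Λ = I.toAddSubgroup := by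
      have c1 : (eisE.toAddEquiv : (ℤ × ℤ) →+ EisR) (p, q) = eisE (p, q) := rfl
      have c2 : (eisE.toAddEquiv : (ℤ × ℤ) →+ EisR) (p + q, -p) = eisE (p + q, -p) := rfl
      rw [hΛ, AddMonoidHom.map_closure, Set.image_insert_eq, Set.image_singleton, c1, c2,
        ← Submodule.span_int_eq_addSubgroupClosure, hsub]
      rfl
    have hquot1 : Nat.card ((ℤ × ℤ) ⧸ Λ) = Nat.card (EisR ⧸ I.toAddSubgroup) :=
      Nat.card_congr (QuotientAddGroup.congr Λ I.toAddSubgroup eisE.toAddEquiv hmap).toEquiv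
    have hquot2 : Nat.card (EisR ⧸ I.toAddSubgroup) = Nat.card (EisR ⧸ I) := rfl
    have hfinal : Nat.card ((ℤ × ℤ) ⧸ Λ) = (p ^ 2 + p * q + q ^ 2).natAbs := by
      rw [hquot1, hquot2, ← habs]
    rw [hfinal]
    exact Int.natAbs_of_nonneg hn0
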